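/- The game c is a coset weighted potential game with respect to w if and only if there exist functions d_i : S_{-i} → ℝ (i = 1,…,n) such that for every strategy profile s ∈ S and every i ∈ {2,…,n}: w_1(s_{-1}) d_i(s_{-i}) − w_i(s_{-i}) d_1(s_{-1}) = w_1(s_{-1}) c_i(s) − w_i(s_{-i}) c_1(s). -/

import Mathlib

/-- `f : S → ℝ` depends only on the strategies of the players other than `i`
(i.e. it is a function of `s_{-i}`). -/
def IndepOf {n : ℕ} {k : Fin n → ℕ} (i : Fin n) (f : (∀ j, Fin (k j)) → ℝ) : Prop :=
  ∀ (s : ∀ j, Fin (k j)) (x : Fin (k i)), f (Function.update s i x) = f s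

/-- `P` is a coset weighted potential function for the game `c` with respect to the
coset-depending weights `w`:
`c_i(x,s_{-i}) − c_i(y,s_{-i}) = w_i(s_{-i}) (P(x,s_{-i}) − P(y,s_{-i}))`. -/
def IsCWPotentialFn {n : ℕ} {k : Fin n → ℕ} (c w : Fin n → (∀ j, Fin (k j)) → ℝ)
    (P : (∀ j, Fin (k j)) → ℝ) : Prop :=
  ∀ (i : Fin n) (s : ∀ j, Fin (k j)) (x y : Fin (k i)),
    c i (Function.update s i x) - c i (Function.update s i y)
      = w i s * (P (Function.update s i x) - P (Function.update s i y))

/-- **Theorem 3.1 (functional form).** `c` is a coset weighted potential game w.r.t. `w`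
iff there exist functions `d_i` of `s_{-i}` such that for every `s ∈ S` and every
`i ∈ {2,…,n}` (player `1` being index `0`):
`w_1(s_{-1}) d_i(s_{-i}) − w_i(s_{-i}) d_1(s_{-1}) = w_1(s_{-1}) c_i(s) − w_i(s_{-i}) c_1(s)`. -/
theorem cwpg_iff_potential_equation (n : ℕ) (hn : 2 ≤ n) (k : Fin n → ℕ)
    (hk : ∀ i, 2 ≤ k i) (c w : Fin n → (∀ j, Fin (k j)) → ℝ)
    (hw : ∀ i s, 0 < w i s) (hwI : ∀ i, IndepOf i (w i)) :
    (∃ P, IsCWPotentialFn c w P) ↔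
      ∃ d : Fin n → (∀ j, Fin (k j)) → ℝ, (∀ i, IndepOf i (d i)) ∧
        ∀ (s : ∀ j, Fin (k j)) (i : Fin n), i ≠ ⟨0, by omega⟩ →
          w ⟨0, by omega⟩ s * d i s - w i s * d ⟨0, by omega⟩ s
            = w ⟨0, by omega⟩ s * c i s - w i s * c ⟨0, by omega⟩ s := by
  constructor
  · rintro ⟨P, hP⟩
    refine ⟨fun i s => c i s - w i s * P s, ?_, ?_⟩
    · intro i s x
      have h := hP i s x (s i)
      rw [Function.update_eq_self i s] at h
      have hwx := hwI i s x
      simp only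
      rw [hwx]
      linear_combination h
    · intro s i hi
      simp only
      ring
  · rintro ⟨d, hdI, hd⟩
    set z : Fin n := ⟨0, by omega⟩ with hz
    refine ⟨fun s => (c z s - d z s) / w z s, ?_⟩
    have key : ∀ (i : Fin n) s, c i s = d i s + w i s * ((c z s - d z s) / w z s) := by
      intro i s
      have hzs := (hw z s).ne'
      by_cases h : i = z
      · subst h; field_simp; ring
      · have h2 := hd s i h
        have h3 : w i s * ((c z s - d z s) / w z s) = c i s - d i s := by
          rw [mul_div_assoc', div_eq_iff hzs]
          linear_combination h2
        linarith
    intro i s x y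
    simp only
    rw [key i (Function.update s i x), key i (Function.update s i y),
      hdI i s x, hdI i s y, hwI i s x, hwI i s y]
    ring
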